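/- Let n ≥ 3 be an integer and let P be a convex integer N-gon containing no point of nℤ² that lies in a slab of the form jn ≤ x₁ ≤ (j+1)n or jn ≤ x₂ ≤ (j+1)n for some integer j (a type I_n polygon). Then: (i) N ≤ 2n + 2; (ii) if n is even and all vertices of P belong to a sublattice of ℤ² with invariant factor sequence (1, n/2), then N ≤ 2n; (iii) if all vertices of P belong to a sublattice of ℤ² with invariant factor sequence (1, n), then N ≤ 2n − 2. -/

import Mathlib

open Set

/-- The point of `ℝ²` corresponding to an integer point. -/
def intPt (p : ℤ × ℤ) : ℝ × ℝ := ((p.1 : ℝ), (p.2 : ℝ))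

/-- A convex integer polygon: the convex hull of a finite set of integer points,
with nonempty interior. -/
def IsConvexIntegerPolygon (P : Set (ℝ × ℝ)) : Prop :=
  ∃ V : Finset (ℤ × ℤ), P = convexHull ℝ (intPt '' ↑V) ∧ (interior P).Nonempty

/-- A sublattice of `ℤ²`: a subgroup generated by two linearly independent vectors. -/
def IsSublatticeZ2 (Λ : AddSubgroup (ℤ × ℤ)) : Prop :=
  ∃ f g : ℤ × ℤ, f.1 * g.2 - f.2 * g.1 ≠ 0 ∧ Λ = AddSubgroup.closure {f, g}

/-- `Λ` has invariant factor sequence `(δ, n)`: it equals `A·ℤ²` for an integer matrix `A`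
with nonzero determinant, where `δ` is the gcd of the four entries of `A` and
`n = |det A| / δ`. -/
def HasInvFactors (Λ : AddSubgroup (ℤ × ℤ)) (δ n : ℕ) : Prop :=
  ∃ a b c d : ℤ, a * d - b * c ≠ 0 ∧
    (∀ p : ℤ × ℤ, p ∈ Λ ↔ ∃ u v : ℤ, p = (a * u + b * v, c * u + d * v)) ∧
    δ = Nat.gcd (Nat.gcd a.natAbs b.natAbs) (Nat.gcd c.natAbs d.natAbs) ∧
    n = (a * d - b * c).natAbs / δ

/-- All vertices (extreme points) of `P` belong to the lattice `Λ`. -/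
def VerticesIn (P : Set (ℝ × ℝ)) (Λ : AddSubgroup (ℤ × ℤ)) : Prop :=
  ∀ x ∈ Set.extremePoints ℝ P, ∃ p ∈ Λ, x = intPt p

/-- `P` contains no point of the lattice `nℤ² = (nℤ) × (nℤ)`. -/
def FreeOfLattice (n : ℕ) (P : Set (ℝ × ℝ)) : Prop :=
  ∀ u v : ℤ, intPt ((n : ℤ) * u, (n : ℤ) * v) ∉ P

/-- Type I_n polygon: a convex integer polygon free of points of `nℤ²` lying in a slab
`jn ≤ x₁ ≤ (j+1)n` or `jn ≤ x₂ ≤ (j+1)n` for some integer `j`. -/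
def TypeI (n : ℕ) (P : Set (ℝ × ℝ)) : Prop :=
  IsConvexIntegerPolygon P ∧ FreeOfLattice n P ∧
  ∃ j : ℤ, (∀ x ∈ P, ((j * n : ℤ) : ℝ) ≤ x.1 ∧ x.1 ≤ (((j + 1) * n : ℤ) : ℝ)) ∨
           (∀ x ∈ P, ((j * n : ℤ) : ℝ) ≤ x.2 ∧ x.2 ≤ (((j + 1) * n : ℤ) : ℝ))


section AuxLemmas

lemma intPt_inj : Function.Injective intPt := by
  intro p q h
  have h1 : (p.1 : ℝ) = q.1 := congrArg Prod.fst h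
  have h2 : (p.2 : ℝ) = q.2 := congrArg Prod.snd h
  exact Prod.ext (by exact_mod_cast h1) (by exact_mod_cast h2)

lemma mem_segment_vert {k y1 y2 y3 : ℝ} (h1 : y1 ≤ y2) (h2 : y2 ≤ y3) :
    ((k, y2) : ℝ × ℝ) ∈ segment ℝ (k, y1) (k, y3) := by
  rcases eq_or_lt_of_le (h1.trans h2) with h | h
  · have : y2 = y1 := le_antisymm (h ▸ h2) h1
    rw [this]
    exact left_mem_segment ℝ _ _
  · refine ⟨(y3 - y2) / (y3 - y1), (y2 - y1) / (y3 - y1),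
      div_nonneg (by linarith) (by linarith), div_nonneg (by linarith) (by linarith), ?_, ?_⟩
    · rw [← add_div, show y3 - y2 + (y2 - y1) = y3 - y1 by ring, div_self (by linarith : y3 - y1 ≠ 0)]
    · have hne : y3 - y1 ≠ 0 := by linarith
      simp only [Prod.smul_mk, smul_eq_mul, Prod.mk_add_mk, Prod.mk.injEq]
      constructor
      · field_simp
        ring
      · field_simp
        ring

lemma mem_segment_horiz {k y1 y2 y3 : ℝ} (h1 : y1 ≤ y2) (h2 : y2 ≤ y3) :
    ((y2, k) : ℝ × ℝ) ∈ segment ℝ (y1, k) (y3, k) := by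
  rcases eq_or_lt_of_le (h1.trans h2) with h | h
  · have : y2 = y1 := le_antisymm (h ▸ h2) h1
    rw [this]
    exact left_mem_segment ℝ _ _
  · refine ⟨(y3 - y2) / (y3 - y1), (y2 - y1) / (y3 - y1),
      div_nonneg (by linarith) (by linarith), div_nonneg (by linarith) (by linarith), ?_, ?_⟩
    · rw [← add_div, show y3 - y2 + (y2 - y1) = y3 - y1 by ring, div_self (by linarith : y3 - y1 ≠ 0)]
    · have hne : y3 - y1 ≠ 0 := by linarith
      simp only [Prod.smul_mk, smul_eq_mul, Prod.mk_add_mk, Prod.mk.injEq]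
      constructor
      · field_simp
        ring
      · field_simp
        ring

lemma fiber_le_two (S : Finset (ℤ × ℤ))
    (hno3 : ∀ p ∈ S, ∀ q ∈ S, ∀ r ∈ S,
      p.1 = q.1 → q.1 = r.1 → p.2 < q.2 → q.2 < r.2 → False)
    (k : ℤ) : (S.filter (fun p => p.1 = k)).card ≤ 2 := by
  by_contra hlt
  push_neg at hlt
  set F := S.filter (fun p => p.1 = k) with hF
  have hinj : Set.InjOn Prod.snd (F : Set (ℤ × ℤ)) := by
    intro p hp q hq h
    simp only [hF, Finset.coe_filter, Set.mem_setOf_eq] at hp hq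
    exact Prod.ext (hp.2.trans hq.2.symm) h
  have hcardI : (F.image Prod.snd).card = F.card := Finset.card_image_of_injOn hinj
  set G := F.image Prod.snd with hG
  have hGcard : 2 < G.card := by omega
  have hGne : G.Nonempty := Finset.card_pos.mp (by omega)
  set m := G.min' hGne with hm
  set M := G.max' hGne with hM
  have h1 : 1 ≤ ((G.erase m).erase M).card := by
    have e1 : G.card - 1 ≤ (G.erase m).card := Finset.pred_card_le_card_erase
    have e2 : (G.erase m).card - 1 ≤ ((G.erase m).erase M).card := Finset.pred_card_le_card_erase
    omega
  obtain ⟨c, hc⟩ := Finset.card_pos.mp (by omega : 0 < ((G.erase m).erase M).card)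
  have hcM : c ≠ M := (Finset.mem_erase.mp hc).1
  have hc' := Finset.mem_of_mem_erase hc
  have hcm : c ≠ m := (Finset.mem_erase.mp hc').1
  have hcG : c ∈ G := Finset.mem_of_mem_erase hc'
  have hmc : m < c := lt_of_le_of_ne (G.min'_le _ hcG) (Ne.symm hcm)
  have hcM' : c < M := lt_of_le_of_ne (G.le_max' _ hcG) hcM
  obtain ⟨p, hpF, hpm⟩ := Finset.mem_image.mp (G.min'_mem hGne)
  obtain ⟨q, hqF, hqc⟩ := Finset.mem_image.mp hcG
  obtain ⟨r, hrF, hrM⟩ := Finset.mem_image.mp (G.max'_mem hGne)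
  simp only [hF, Finset.mem_filter] at hpF hqF hrF
  exact hno3 p hpF.1 q hqF.1 r hrF.1 (hpF.2.trans hqF.2.symm) (hqF.2.trans hrF.2.symm)
    (by rw [hpm, hqc]; exact hmc) (by rw [hqc, hrM]; exact hcM')

lemma card_le_cols (S : Finset (ℤ × ℤ)) (T : Finset ℤ)
    (h1 : ∀ p ∈ S, p.1 ∈ T)
    (h2 : ∀ k, (S.filter (fun p => p.1 = k)).card ≤ 2) :
    S.card ≤ 2 * T.card := by
  rw [Finset.card_eq_sum_card_fiberwise h1]
  calc ∑ k ∈ T, (S.filter (fun p => p.1 = k)).card ≤ ∑ _k ∈ T, 2 :=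
        Finset.sum_le_sum (fun k _ => h2 k)
    _ = 2 * T.card := by rw [Finset.sum_const, smul_eq_mul, mul_comm]

lemma spacing (a b c d u v : ℤ) (hg0 : 0 < Int.gcd a b) (h0 : a * u + b * v = 0) :
    ((a * d - b * c) / (Int.gcd a b : ℤ)) ∣ (c * u + d * v) := by
  set g : ℤ := (Int.gcd a b : ℤ) with hg
  have hgz : g ≠ 0 := Int.natCast_ne_zero.mpr hg0.ne'
  obtain ⟨a', ha⟩ : g ∣ a := Int.gcd_dvd_left a b
  obtain ⟨b', hb⟩ : g ∣ b := Int.gcd_dvd_right a b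
  have ha' : a / g = a' := by rw [ha]; exact Int.mul_ediv_cancel_left _ hgz
  have hb' : b / g = b' := by rw [hb]; exact Int.mul_ediv_cancel_left _ hgz
  have hco : IsCoprime a' b' := by
    have h1 : Int.gcd (a / g) (b / g) = 1 := Int.gcd_div_gcd_div_gcd hg0
    rw [ha', hb'] at h1
    exact Int.isCoprime_iff_gcd_eq_one.mpr h1
  have hE : (a * d - b * c) / g = a' * d - b' * c := by
    rw [ha, hb, show g * a' * d - g * b' * c = g * (a' * d - b' * c) by ring]
    exact Int.mul_ediv_cancel_left _ hgz
  rw [hE]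
  set E := a' * d - b' * c with hEdef
  have h0' : a' * u + b' * v = 0 := by
    have hmul : g * (a' * u + b' * v) = 0 := by linear_combination h0 - u * ha - v * hb
    rcases mul_eq_zero.mp hmul with h | h
    · exact absurd h hgz
    · exact h
  have hEa : E ∣ a' * (c * u + d * v) := ⟨v, by linear_combination c * h0'⟩
  have hEb : E ∣ b' * (c * u + d * v) := ⟨-u, by linear_combination d * h0'⟩
  obtain ⟨x, y, hxy⟩ := hco
  have hsum : c * u + d * v = x * (a' * (c * u + d * v)) + y * (b' * (c * u + d * v)) := by
    linear_combination (c * u + d * v) * hxy.symm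
  rw [hsum]
  exact dvd_add (hEa.mul_left x) (hEb.mul_left y)

lemma hv_lemma (n : ℕ) (a b c d : ℤ) (p : ℤ × ℤ)
    (hdvdDn : (a * d - b * c).natAbs ∣ n)
    (hdvd : (n : ℤ) ∣ p.1)
    (hrep : ∃ u v : ℤ, p = (a * u + b * v, c * u + d * v))
    (hg0 : 0 < Int.gcd a b) :
    (((a * d - b * c).natAbs / Int.gcd a b : ℕ) : ℤ) ∣ p.2 := by
  obtain ⟨u, v, hpv⟩ := hrep
  set D := a * d - b * c with hD
  have hDn : D ∣ (n : ℤ) := Int.natAbs_dvd.mp (Int.natCast_dvd_natCast.mpr hdvdDn)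
  obtain ⟨w, hw⟩ : D ∣ p.1 := hDn.trans hdvd
  have hp1 : p.1 = a * u + b * v := by rw [hpv]
  have hp2 : p.2 = c * u + d * v := by rw [hpv]
  have h0 : a * (u - d * w) + b * (v + c * w) = 0 := by linear_combination hw - hp1
  have h2 : c * (u - d * w) + d * (v + c * w) = p.2 := by linear_combination -hp2
  have hsp := spacing a b c d (u - d * w) (v + c * w) hg0 h0
  rw [h2] at hsp
  -- convert (D / g) to natAbs
  have hgD : (Int.gcd a b : ℤ) ∣ D := dvd_sub ((Int.gcd_dvd_left a b).mul_right d) ((Int.gcd_dvd_right a b).mul_right c)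
  have hfac : D = (Int.gcd a b : ℤ) * (D / (Int.gcd a b : ℤ)) := (Int.mul_ediv_cancel' hgD).symm
  have hnat : D.natAbs = Int.gcd a b * (D / (Int.gcd a b : ℤ)).natAbs := by
    conv_lhs => rw [hfac]
    rw [Int.natAbs_mul, Int.natAbs_natCast]
  have hq : D.natAbs / Int.gcd a b = (D / (Int.gcd a b : ℤ)).natAbs := by
    rw [hnat]; exact Nat.mul_div_cancel_left _ hg0
  rw [hq]
  exact Int.natAbs_dvd.mpr hsp

lemma count1 (n : ℕ) (j : ℤ) (S : Finset (ℤ × ℤ))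
    (Hslab : ∀ p ∈ S, j * (n : ℤ) ≤ p.1 ∧ p.1 ≤ j * (n : ℤ) + n)
    (Hcol : ∀ k, (S.filter (fun p => p.1 = k)).card ≤ 2) :
    S.card ≤ 2 * n + 2 := by
  set K := j * (n : ℤ) with hK
  have h := card_le_cols S ((Finset.range (n + 1)).image (fun i : ℕ => K + (i : ℤ)))
    (fun p hp => by
      obtain ⟨l, u⟩ := Hslab p hp
      rw [Finset.mem_image]
      exact ⟨(p.1 - K).toNat, Finset.mem_range.mpr (by omega), by omega⟩) Hcol
  have h2 : ((Finset.range (n + 1)).image (fun i : ℕ => K + (i : ℤ))).card ≤ n + 1 :=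
    Finset.card_image_le.trans (by simp)
  omega

lemma count3 (n : ℕ) (hn : 3 ≤ n) (j : ℤ) (S : Finset (ℤ × ℤ))
    (Hslab : ∀ p ∈ S, j * (n : ℤ) ≤ p.1 ∧ p.1 ≤ j * (n : ℤ) + n)
    (Hcol : ∀ k, (S.filter (fun p => p.1 = k)).card ≤ 2)
    (Hfree : ∀ p ∈ S, ∀ q ∈ S, p.1 = q.1 → ∀ y : ℤ, p.2 ≤ y → y ≤ q.2 →
      (n : ℤ) ∣ p.1 → (n : ℤ) ∣ y → False)
    (a b c d : ℤ) (hdet : (a * d - b * c).natAbs = n)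
    (hmem : ∀ p ∈ S, ∃ u v : ℤ, p = (a * u + b * v, c * u + d * v)) :
    S.card ≤ 2 * n - 2 := by
  set D := a * d - b * c with hD
  have hD0 : D ≠ 0 := by
    intro h
    rw [h] at hdet
    simp at hdet
    omega
  set g := Int.gcd a b with hg
  have hg0 : 0 < g := Int.gcd_pos_iff.mpr (by
    by_contra hc
    push_neg at hc
    apply hD0
    rw [hD, hc.1, hc.2]; ring)
  have hga : (g : ℤ) ∣ a := Int.gcd_dvd_left a b
  have hgb : (g : ℤ) ∣ b := Int.gcd_dvd_right a b
  have hgD : (g : ℤ) ∣ D := dvd_sub (hga.mul_right d) (hgb.mul_right c)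
  have hgn : g ∣ n := by
    have h1 : ((g : ℤ)).natAbs ∣ D.natAbs := Int.natAbs_dvd_natAbs.mpr hgD
    rwa [Int.natAbs_natCast, hdet] at h1
  have hgS : ∀ p ∈ S, (g : ℤ) ∣ p.1 := by
    intro p hp
    obtain ⟨u, v, hpv⟩ := hmem p hp
    rw [hpv]
    exact dvd_add (hga.mul_right u) (hgb.mul_right v)
  have hv : ∀ p ∈ S, (n : ℤ) ∣ p.1 → ((n / g : ℕ) : ℤ) ∣ p.2 := by
    intro p hp hdvd
    have := hv_lemma n a b c d p (by rw [← hD, hdet]) hdvd (hmem p hp) hg0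
    rwa [← hD, hdet] at this
  rcases eq_or_lt_of_le (show 1 ≤ g from hg0) with hg1 | hg2
  · -- g = 1 : no vertices on boundary columns
    have hno : ∀ p ∈ S, ¬ (n : ℤ) ∣ p.1 := by
      intro p hp h
      have h2 := hv p hp h
      rw [← hg1, Nat.div_one] at h2
      exact Hfree p hp p hp rfl p.2 le_rfl le_rfl h h2
    set K := j * (n : ℤ) with hK
    have hcard := card_le_cols S ((Finset.range (n - 1)).image (fun i : ℕ => K + 1 + (i : ℤ)))
      (fun p hp => by
        obtain ⟨l, u⟩ := Hslab p hp
        have h1 : p.1 ≠ K := fun h => hno p hp (h ▸ ⟨j, by rw [hK]; ring⟩)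
        have h2 : p.1 ≠ K + n := fun h => hno p hp (h ▸ ⟨j + 1, by rw [hK]; ring⟩)
        rw [Finset.mem_image]
        exact ⟨(p.1 - (K + 1)).toNat, Finset.mem_range.mpr (by omega), by omega⟩) Hcol
    have h2 : ((Finset.range (n - 1)).image (fun i : ℕ => K + 1 + (i : ℤ))).card ≤ n - 1 :=
      Finset.card_image_le.trans (by simp)
    omega
  · -- 2 ≤ g
    set K := j * (n : ℤ) with hK
    have hgnz : (g : ℤ) ∣ (n : ℤ) := Int.natCast_dvd_natCast.mpr hgn
    have hgpos : (0 : ℤ) < g := by exact_mod_cast hg0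
    have hnq : (n : ℤ) = (g : ℤ) * ((n / g : ℕ) : ℤ) := by
      exact_mod_cast (Nat.mul_div_cancel' hgn).symm
    have hcard := card_le_cols S ((Finset.range (n / g + 1)).image (fun i : ℕ => K + (g : ℤ) * (i : ℤ)))
      (fun p hp => by
        obtain ⟨l, u⟩ := Hslab p hp
        obtain ⟨i₀, hi₀⟩ : (g : ℤ) ∣ p.1 - K := dvd_sub (hgS p hp) (hK ▸ hgnz.mul_left j)
        have hb0 : (0 : ℤ) ≤ (g : ℤ) * i₀ := by rw [← hi₀]; omega
        have hb1 : (g : ℤ) * i₀ ≤ (g : ℤ) * ((n / g : ℕ) : ℤ) := by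
          rw [← hnq, ← hi₀]; omega
        have hi0nn : 0 ≤ i₀ := nonneg_of_mul_nonneg_right hb0 hgpos
        have hup : i₀ ≤ ((n / g : ℕ) : ℤ) := le_of_mul_le_mul_left hb1 hgpos
        rw [Finset.mem_image]
        refine ⟨i₀.toNat, Finset.mem_range.mpr (by omega), ?_⟩
        rw [Int.toNat_of_nonneg hi0nn]
        omega) Hcol
    have h2 : ((Finset.range (n / g + 1)).image (fun i : ℕ => K + (g : ℤ) * (i : ℤ))).card ≤ n / g + 1 :=
      Finset.card_image_le.trans (by simp)
    have hdiv : n / g ≤ n / 2 := Nat.div_le_div_left hg2 (by norm_num)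
    omega

lemma count2 (n : ℕ) (hn : 3 ≤ n) (heven : Even n) (j : ℤ) (S : Finset (ℤ × ℤ))
    (Hslab : ∀ p ∈ S, j * (n : ℤ) ≤ p.1 ∧ p.1 ≤ j * (n : ℤ) + n)
    (Hcol : ∀ k, (S.filter (fun p => p.1 = k)).card ≤ 2)
    (Hfree : ∀ p ∈ S, ∀ q ∈ S, p.1 = q.1 → ∀ y : ℤ, p.2 ≤ y → y ≤ q.2 →
      (n : ℤ) ∣ p.1 → (n : ℤ) ∣ y → False)
    (a b c d : ℤ) (hdet : (a * d - b * c).natAbs = n / 2)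
    (hmem : ∀ p ∈ S, ∃ u v : ℤ, p = (a * u + b * v, c * u + d * v)) :
    S.card ≤ 2 * n := by
  obtain ⟨m, hm⟩ := heven
  have hm2 : n = 2 * m := by omega
  have hmge : 2 ≤ m := by omega
  have hdet' : (a * d - b * c).natAbs = m := by omega
  set D := a * d - b * c with hD
  have hD0 : D ≠ 0 := by
    intro h
    rw [h] at hdet'
    simp at hdet'
    omega
  set g := Int.gcd a b with hg
  have hg0 : 0 < g := Int.gcd_pos_iff.mpr (by
    by_contra hc
    push_neg at hc
    apply hD0
    rw [hD, hc.1, hc.2]; ring)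
  have hga : (g : ℤ) ∣ a := Int.gcd_dvd_left a b
  have hgb : (g : ℤ) ∣ b := Int.gcd_dvd_right a b
  have hgD : (g : ℤ) ∣ D := dvd_sub (hga.mul_right d) (hgb.mul_right c)
  have hgm : g ∣ m := by
    have h1 : ((g : ℤ)).natAbs ∣ D.natAbs := Int.natAbs_dvd_natAbs.mpr hgD
    rwa [Int.natAbs_natCast, hdet'] at h1
  have hgn : g ∣ n := hm2 ▸ hgm.mul_left 2
  have hgS : ∀ p ∈ S, (g : ℤ) ∣ p.1 := by
    intro p hp
    obtain ⟨u, v, hpv⟩ := hmem p hp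
    rw [hpv]
    exact dvd_add (hga.mul_right u) (hgb.mul_right v)
  have hv : ∀ p ∈ S, (n : ℤ) ∣ p.1 → ((m / g : ℕ) : ℤ) ∣ p.2 := by
    intro p hp hdvd
    have := hv_lemma n a b c d p (by rw [← hD, hdet']; exact hm2 ▸ (dvd_mul_left m 2)) hdvd
      (hmem p hp) hg0
    rwa [← hD, hdet'] at this
  rcases eq_or_lt_of_le (show 1 ≤ g from hg0) with hg1 | hg2
  · -- g = 1 : at most one vertex on each boundary column
    have hmz : (0 : ℤ) < m := by exact_mod_cast (by omega : 0 < m)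
    have hn2 : (n : ℤ) = 2 * (m : ℤ) := by exact_mod_cast hm2
    have hv' : ∀ p ∈ S, (n : ℤ) ∣ p.1 → (m : ℤ) ∣ p.2 := by
      intro p hp hdvd
      have := hv p hp hdvd
      rwa [← hg1, Nat.div_one] at this
    have hsingle : ∀ p ∈ S, ∀ q ∈ S, (n : ℤ) ∣ p.1 → p.1 = q.1 → p = q := by
      intro p hp q hq hdp heq
      have hdq : (n : ℤ) ∣ q.1 := heq ▸ hdp
      obtain ⟨s, hs⟩ := hv' p hp hdp
      obtain ⟨t, ht⟩ := hv' q hq hdq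
      have hnp2 : ¬ (n : ℤ) ∣ p.2 := fun h => Hfree p hp p hp rfl p.2 le_rfl le_rfl hdp h
      have hnq2 : ¬ (n : ℤ) ∣ q.2 := fun h => Hfree q hq q hq rfl q.2 le_rfl le_rfl hdq h
      have hsodd : ¬ (2 ∣ s) := by
        rintro ⟨w, hw⟩
        exact hnp2 ⟨w, by rw [hs, hw, hn2]; ring⟩
      have htodd : ¬ (2 ∣ t) := by
        rintro ⟨w, hw⟩
        exact hnq2 ⟨w, by rw [ht, hw, hn2]; ring⟩
      rcases lt_trichotomy p.2 q.2 with hlt | heq2 | hgt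
      · exfalso
        have hst : s < t := by
          rw [hs, ht] at hlt
          exact lt_of_mul_lt_mul_left hlt hmz.le
        have hst2 : s + 2 ≤ t := by omega
        obtain ⟨w, hw⟩ : ∃ w, s + 1 = 2 * w := ⟨(s + 1) / 2, by omega⟩
        refine Hfree p hp q hq heq ((m : ℤ) * (s + 1)) ?_ ?_ hdp ⟨w, ?_⟩
        · rw [hs]; exact mul_le_mul_of_nonneg_left (by omega) hmz.le
        · rw [ht]; exact mul_le_mul_of_nonneg_left (by omega) hmz.le
        · rw [hw, hn2]; ring
      · exact Prod.ext heq heq2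
      · exfalso
        have hst : t < s := by
          rw [hs, ht] at hgt
          exact lt_of_mul_lt_mul_left hgt hmz.le
        have hst2 : t + 2 ≤ s := by omega
        obtain ⟨w, hw⟩ : ∃ w, t + 1 = 2 * w := ⟨(t + 1) / 2, by omega⟩
        refine Hfree q hq p hp heq.symm ((m : ℤ) * (t + 1)) ?_ ?_ hdq ⟨w, ?_⟩
        · rw [ht]; exact mul_le_mul_of_nonneg_left (by omega) hmz.le
        · rw [hs]; exact mul_le_mul_of_nonneg_left (by omega) hmz.le
        · rw [hw, hn2]; ring
    set K := j * (n : ℤ) with hK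
    have hdK : (n : ℤ) ∣ K := ⟨j, by rw [hK]; ring⟩
    have hdK' : (n : ℤ) ∣ K + n := ⟨j + 1, by rw [hK]; ring⟩
    have hb1 : (S.filter (fun p => p.1 = K)).card ≤ 1 := by
      apply Finset.card_le_one.mpr
      intro p hp q hq
      rw [Finset.mem_filter] at hp hq
      exact hsingle p hp.1 q hq.1 (hp.2 ▸ hdK) (hp.2.trans hq.2.symm)
    have hb2 : (S.filter (fun p => p.1 = K + n)).card ≤ 1 := by
      apply Finset.card_le_one.mpr
      intro p hp q hq
      rw [Finset.mem_filter] at hp hq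
      exact hsingle p hp.1 q hq.1 (hp.2 ▸ hdK') (hp.2.trans hq.2.symm)
    -- interior columns
    have hint : (S.filter (fun p => ¬ (n : ℤ) ∣ p.1)).card ≤ 2 * (n - 1) := by
      have hcard := card_le_cols (S.filter (fun p => ¬ (n : ℤ) ∣ p.1))
        ((Finset.range (n - 1)).image (fun i : ℕ => K + 1 + (i : ℤ)))
        (fun p hp => by
          rw [Finset.mem_filter] at hp
          obtain ⟨l, u⟩ := Hslab p hp.1
          have h1 : p.1 ≠ K := fun h => hp.2 (h ▸ hdK)
          have h2 : p.1 ≠ K + n := fun h => hp.2 (h ▸ hdK')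
          rw [Finset.mem_image]
          exact ⟨(p.1 - (K + 1)).toNat, Finset.mem_range.mpr (by omega), by omega⟩)
        (fun k => le_trans (Finset.card_le_card
          (Finset.filter_subset_filter _ (Finset.filter_subset _ S))) (Hcol k))
      have h2 : ((Finset.range (n - 1)).image (fun i : ℕ => K + 1 + (i : ℤ))).card ≤ n - 1 :=
        Finset.card_image_le.trans (by simp)
      omega
    -- boundary columns
    have hbd : (S.filter (fun p => (n : ℤ) ∣ p.1)).card ≤ 2 := by
      have hsub : S.filter (fun p => (n : ℤ) ∣ p.1) ⊆
          (S.filter (fun p => p.1 = K)) ∪ (S.filter (fun p => p.1 = K + n)) := by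
        intro p hp
        rw [Finset.mem_filter] at hp
        obtain ⟨hpS, hdvd⟩ := hp
        obtain ⟨l, u⟩ := Hslab p hpS
        obtain ⟨e, he⟩ : (n : ℤ) ∣ (p.1 - K) := dvd_sub hdvd hdK
        have hnpos : (0 : ℤ) < n := by exact_mod_cast (by omega : 0 < n)
        have he0 : 0 ≤ e := by nlinarith
        have he1 : e ≤ 1 := by nlinarith
        rw [Finset.mem_union, Finset.mem_filter, Finset.mem_filter]
        interval_cases e
        · left; exact ⟨hpS, by omega⟩
        · right; exact ⟨hpS, by omega⟩
      calc (S.filter (fun p => (n : ℤ) ∣ p.1)).card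
          ≤ ((S.filter (fun p => p.1 = K)) ∪ (S.filter (fun p => p.1 = K + n))).card :=
            Finset.card_le_card hsub
        _ ≤ _ := Finset.card_union_le _ _
        _ ≤ 2 := by omega
    have hsplit := Finset.card_filter_add_card_filter_not
      (s := S) (p := fun p => (n : ℤ) ∣ p.1)
    omega
  · -- 2 ≤ g
    set K := j * (n : ℤ) with hK
    have hgnz : (g : ℤ) ∣ (n : ℤ) := Int.natCast_dvd_natCast.mpr hgn
    have hgpos : (0 : ℤ) < g := by exact_mod_cast hg0
    have hnq : (n : ℤ) = (g : ℤ) * ((n / g : ℕ) : ℤ) := by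
      exact_mod_cast (Nat.mul_div_cancel' hgn).symm
    have hcard := card_le_cols S ((Finset.range (n / g + 1)).image (fun i : ℕ => K + (g : ℤ) * (i : ℤ)))
      (fun p hp => by
        obtain ⟨l, u⟩ := Hslab p hp
        obtain ⟨i₀, hi₀⟩ : (g : ℤ) ∣ p.1 - K := dvd_sub (hgS p hp) (hK ▸ hgnz.mul_left j)
        have hb0 : (0 : ℤ) ≤ (g : ℤ) * i₀ := by rw [← hi₀]; omega
        have hb1 : (g : ℤ) * i₀ ≤ (g : ℤ) * ((n / g : ℕ) : ℤ) := by
          rw [← hnq, ← hi₀]; omega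
        have hi0nn : 0 ≤ i₀ := nonneg_of_mul_nonneg_right hb0 hgpos
        have hup : i₀ ≤ ((n / g : ℕ) : ℤ) := le_of_mul_le_mul_left hb1 hgpos
        rw [Finset.mem_image]
        refine ⟨i₀.toNat, Finset.mem_range.mpr (by omega), ?_⟩
        rw [Int.toNat_of_nonneg hi0nn]
        omega) Hcol
    have h2 : ((Finset.range (n / g + 1)).image (fun i : ℕ => K + (g : ℤ) * (i : ℤ))).card ≤ n / g + 1 :=
      Finset.card_image_le.trans (by simp)
    have hdiv : n / g ≤ n / 2 := Nat.div_le_div_left hg2 (by norm_num)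
    omega

end AuxLemmas

/-- Sub-Theorem C for type I polygons. -/
theorem stmt3 (n N : ℕ) (hn : 3 ≤ n) (P : Set (ℝ × ℝ)) (hP : TypeI n P)
    (hcard : (Set.extremePoints ℝ P).ncard = N) :
    N ≤ 2 * n + 2 ∧
    (Even n → ∀ Λ : AddSubgroup (ℤ × ℤ), IsSublatticeZ2 Λ → HasInvFactors Λ 1 (n / 2) →
      VerticesIn P Λ → N ≤ 2 * n) ∧
    (∀ Λ : AddSubgroup (ℤ × ℤ), IsSublatticeZ2 Λ → HasInvFactors Λ 1 n →
      VerticesIn P Λ → N ≤ 2 * n - 2) := by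
  obtain ⟨⟨V, hPeq, -⟩, hfreeL, j, hslab⟩ := hP
  have hconv : Convex ℝ P := hPeq ▸ convex_convexHull ℝ _
  have hEsub : Set.extremePoints ℝ P ⊆ intPt '' ↑V := by
    rw [hPeq]; exact extremePoints_convexHull_subset
  classical
  set S₀ := V.filter (fun p => intPt p ∈ Set.extremePoints ℝ P) with hS₀
  have hS₀E : ∀ p ∈ S₀, intPt p ∈ Set.extremePoints ℝ P :=
    fun p hp => (Finset.mem_filter.mp hp).2
  have hES₀ : Set.extremePoints ℝ P = intPt '' ↑S₀ := by
    apply Set.Subset.antisymm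
    · intro x hx
      obtain ⟨p, hpV, hpx⟩ := hEsub hx
      refine ⟨p, ?_, hpx⟩
      rw [Finset.mem_coe, hS₀, Finset.mem_filter]
      exact ⟨Finset.mem_coe.mp hpV, hpx ▸ hx⟩
    · rintro x ⟨p, hp, rfl⟩
      exact hS₀E p (Finset.mem_coe.mp hp)
  have hcardN : S₀.card = N := by
    rw [← hcard, hES₀, Set.ncard_image_of_injective _ intPt_inj, Set.ncard_coe_finset]
  have hS₀P : ∀ p ∈ S₀, intPt p ∈ P := fun p hp => extremePoints_subset (hS₀E p hp)
  have hS₀Λ : ∀ (Λ : AddSubgroup (ℤ × ℤ)), VerticesIn P Λ → ∀ p ∈ S₀, p ∈ Λ := by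
    intro Λ hvert p hp
    obtain ⟨q, hqΛ, hq⟩ := hvert _ (hS₀E p hp)
    rw [intPt_inj hq]
    exact hqΛ
  rcases hslab with hsl | hsl
  · -- slab in the first coordinate
    have Hslab : ∀ p ∈ S₀, j * (n : ℤ) ≤ p.1 ∧ p.1 ≤ j * (n : ℤ) + n := by
      intro p hp
      obtain ⟨l, u⟩ := hsl (intPt p) (hS₀P p hp)
      simp only [intPt] at l u
      have l' : j * (n : ℤ) ≤ p.1 := by exact_mod_cast l
      have u' : p.1 ≤ (j + 1) * (n : ℤ) := by exact_mod_cast u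
      exact ⟨l', by linarith⟩
    have Hno3 : ∀ p ∈ S₀, ∀ q ∈ S₀, ∀ r ∈ S₀,
        p.1 = q.1 → q.1 = r.1 → p.2 < q.2 → q.2 < r.2 → False := by
      intro p hp q hq r hr h1 h2 h3 h4
      have hqe := hS₀E q hq
      rw [mem_extremePoints_iff_forall_segment] at hqe
      have e1 : intPt p = (((q.1 : ℤ) : ℝ), ((p.2 : ℤ) : ℝ)) := by simp [intPt, h1]
      have e3 : intPt r = (((q.1 : ℤ) : ℝ), ((r.2 : ℤ) : ℝ)) := by simp [intPt, ← h2]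
      have hseg : intPt q ∈ segment ℝ (intPt p) (intPt r) := by
        rw [e1, e3]
        exact mem_segment_vert (by exact_mod_cast h3.le) (by exact_mod_cast h4.le)
      rcases hqe.2 _ (hS₀P p hp) _ (hS₀P r hr) hseg with h | h
      · have := intPt_inj h
        rw [this] at h3
        exact lt_irrefl _ h3
      · have := intPt_inj h
        rw [this] at h4
        exact lt_irrefl _ h4
    have Hfree : ∀ p ∈ S₀, ∀ q ∈ S₀, p.1 = q.1 → ∀ y : ℤ, p.2 ≤ y → y ≤ q.2 →
        (n : ℤ) ∣ p.1 → (n : ℤ) ∣ y → False := by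
      intro p hp q hq h1 y hy1 hy2 hd1 hd2
      obtain ⟨u, hu⟩ := hd1
      obtain ⟨v, hv⟩ := hd2
      have e1 : intPt p = (((p.1 : ℤ) : ℝ), ((p.2 : ℤ) : ℝ)) := rfl
      have e2 : intPt q = (((p.1 : ℤ) : ℝ), ((q.2 : ℤ) : ℝ)) := by simp [intPt, ← h1]
      have hseg : intPt (p.1, y) ∈ segment ℝ (intPt p) (intPt q) := by
        rw [e1, e2]
        exact mem_segment_vert (by exact_mod_cast hy1) (by exact_mod_cast hy2)
      have hmem := hconv.segment_subset (hS₀P p hp) (hS₀P q hq) hseg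
      have hpt : (((n : ℤ) * u, (n : ℤ) * v) : ℤ × ℤ) = (p.1, y) := by rw [← hu, ← hv]
      exact hfreeL u v (by rw [hpt]; exact hmem)
    have Hcol := fiber_le_two S₀ Hno3
    refine ⟨?_, ?_, ?_⟩
    · have := count1 n j S₀ Hslab Hcol
      omega
    · intro hev Λ _ hinv hvert
      obtain ⟨a, b, c, d, hD, hmemΛ, hδ, hn'⟩ := hinv
      rw [Nat.div_one] at hn'
      have hmem : ∀ p ∈ S₀, ∃ u v : ℤ, p = (a * u + b * v, c * u + d * v) :=
        fun p hp => (hmemΛ p).mp (hS₀Λ Λ hvert p hp)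
      have := count2 n hn hev j S₀ Hslab Hcol Hfree a b c d hn'.symm hmem
      omega
    · intro Λ _ hinv hvert
      obtain ⟨a, b, c, d, hD, hmemΛ, hδ, hn'⟩ := hinv
      rw [Nat.div_one] at hn'
      have hmem : ∀ p ∈ S₀, ∃ u v : ℤ, p = (a * u + b * v, c * u + d * v) :=
        fun p hp => (hmemΛ p).mp (hS₀Λ Λ hvert p hp)
      have := count3 n hn j S₀ Hslab Hcol Hfree a b c d hn'.symm hmem
      omega
  · -- slab in the second coordinate : work with swapped points
    set S := S₀.image Prod.swap with hS
    have hcardS : S.card = N := by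
      rw [hS, Finset.card_image_of_injective _ Prod.swap_injective]
      exact hcardN
    have hmemS : ∀ p ∈ S, p.swap ∈ S₀ := by
      intro p hp
      obtain ⟨q, hq, rfl⟩ := Finset.mem_image.mp hp
      rwa [Prod.swap_swap]
    have hSP : ∀ p ∈ S, intPt p.swap ∈ P := fun p hp => hS₀P _ (hmemS p hp)
    have Hslab : ∀ p ∈ S, j * (n : ℤ) ≤ p.1 ∧ p.1 ≤ j * (n : ℤ) + n := by
      intro p hp
      obtain ⟨l, u⟩ := hsl (intPt p.swap) (hSP p hp)
      simp only [intPt, Prod.snd_swap] at l u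
      have l' : j * (n : ℤ) ≤ p.1 := by exact_mod_cast l
      have u' : p.1 ≤ (j + 1) * (n : ℤ) := by exact_mod_cast u
      exact ⟨l', by linarith⟩
    have Hno3 : ∀ p ∈ S, ∀ q ∈ S, ∀ r ∈ S,
        p.1 = q.1 → q.1 = r.1 → p.2 < q.2 → q.2 < r.2 → False := by
      intro p hp q hq r hr h1 h2 h3 h4
      have hqe := hS₀E _ (hmemS q hq)
      rw [mem_extremePoints_iff_forall_segment] at hqe
      have e1 : intPt p.swap = (((p.2 : ℤ) : ℝ), ((q.1 : ℤ) : ℝ)) := by simp [intPt, h1]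
      have e2 : intPt q.swap = (((q.2 : ℤ) : ℝ), ((q.1 : ℤ) : ℝ)) := by simp [intPt]
      have e3 : intPt r.swap = (((r.2 : ℤ) : ℝ), ((q.1 : ℤ) : ℝ)) := by simp [intPt, ← h2]
      have hseg : intPt q.swap ∈ segment ℝ (intPt p.swap) (intPt r.swap) := by
        rw [e1, e2, e3]
        exact mem_segment_horiz (by exact_mod_cast h3.le) (by exact_mod_cast h4.le)
      rcases hqe.2 _ (hSP p hp) _ (hSP r hr) hseg with h | h
      · have := Prod.swap_injective (intPt_inj h)
        rw [this] at h3
        exact lt_irrefl _ h3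
      · have := Prod.swap_injective (intPt_inj h)
        rw [this] at h4
        exact lt_irrefl _ h4
    have Hfree : ∀ p ∈ S, ∀ q ∈ S, p.1 = q.1 → ∀ y : ℤ, p.2 ≤ y → y ≤ q.2 →
        (n : ℤ) ∣ p.1 → (n : ℤ) ∣ y → False := by
      intro p hp q hq h1 y hy1 hy2 hd1 hd2
      obtain ⟨u, hu⟩ := hd1
      obtain ⟨v, hv⟩ := hd2
      have e1 : intPt p.swap = (((p.2 : ℤ) : ℝ), ((p.1 : ℤ) : ℝ)) := by simp [intPt]
      have e2 : intPt q.swap = (((q.2 : ℤ) : ℝ), ((p.1 : ℤ) : ℝ)) := by simp [intPt, ← h1]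
      have hseg : intPt (y, p.1) ∈ segment ℝ (intPt p.swap) (intPt q.swap) := by
        rw [e1, e2]
        exact mem_segment_horiz (by exact_mod_cast hy1) (by exact_mod_cast hy2)
      have hmem := hconv.segment_subset (hSP p hp) (hSP q hq) hseg
      have hpt : (((n : ℤ) * v, (n : ℤ) * u) : ℤ × ℤ) = (y, p.1) := by rw [← hu, ← hv]
      exact hfreeL v u (by rw [hpt]; exact hmem)
    have Hcol := fiber_le_two S Hno3
    have hmemgen : ∀ (Λ : AddSubgroup (ℤ × ℤ)), VerticesIn P Λ →
        ∀ a b c d : ℤ, (∀ x : ℤ × ℤ, x ∈ Λ ↔ ∃ u v : ℤ, x = (a * u + b * v, c * u + d * v)) →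
        ∀ p ∈ S, ∃ u v : ℤ, p = (c * u + d * v, a * u + b * v) := by
      intro Λ hvert a b c d hmemΛ p hp
      obtain ⟨u, v, huv⟩ := (hmemΛ p.swap).mp (hS₀Λ Λ hvert _ (hmemS p hp))
      refine ⟨u, v, ?_⟩
      rw [← Prod.swap_swap p, huv]
      rfl
    refine ⟨?_, ?_, ?_⟩
    · have := count1 n j S Hslab Hcol
      omega
    · intro hev Λ _ hinv hvert
      obtain ⟨a, b, c, d, hD, hmemΛ, hδ, hn'⟩ := hinv
      rw [Nat.div_one] at hn'
      have hdet : (c * b - d * a).natAbs = n / 2 := by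
        rw [show c * b - d * a = -(a * d - b * c) by ring, Int.natAbs_neg]
        exact hn'.symm
      have := count2 n hn hev j S Hslab Hcol Hfree c d a b hdet
        (hmemgen Λ hvert a b c d hmemΛ)
      omega
    · intro Λ _ hinv hvert
      obtain ⟨a, b, c, d, hD, hmemΛ, hδ, hn'⟩ := hinv
      rw [Nat.div_one] at hn'
      have hdet : (c * b - d * a).natAbs = n := by
        rw [show c * b - d * a = -(a * d - b * c) by ring, Int.natAbs_neg]
        exact hn'.symm
      have := count3 n hn j S Hslab Hcol Hfree c d a b hdet
        (hmemgen Λ hvert a b c d hmemΛ)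
      omega
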